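/- Let F be a field, α, α' ∈ F nonzero, and β, γ, δ, β', γ', δ' ∈ F. Set A₁ = A₁' = E₁₂, A₂ = α E₂₁, A₂' = α' E₂₁, A₃ = [[β, γ],[δ, -β]], A₃' = [[β', γ'],[δ', -β']]. If tr(AᵢAⱼ) = tr(Aᵢ'Aⱼ') for all 1 ≤ i < j ≤ 3 and tr(A₁A₂A₃) = tr(A₁'A₂'A₃'), then α = α', β = β', γ = γ', and δ = δ' (hence Aᵢ = Aᵢ' for all i). -/

import Mathlib

open Matrix

theorem stmt_5 (F : Type*) [Field F] (α α' β γ δ β' γ' δ' : F)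
    (hα : α ≠ 0) (hα' : α' ≠ 0)
    (A₁ A₂ A₃ A₁' A₂' A₃' : Matrix (Fin 2) (Fin 2) F)
    (hA₁ : A₁ = !![0, 1; 0, 0]) (hA₁' : A₁' = !![0, 1; 0, 0])
    (hA₂ : A₂ = α • !![0, 0; 1, 0]) (hA₂' : A₂' = α' • !![0, 0; 1, 0])
    (hA₃ : A₃ = !![β, γ; δ, -β]) (hA₃' : A₃' = !![β', γ'; δ', -β'])
    (h12 : (A₁ * A₂).trace = (A₁' * A₂').trace)
    (h13 : (A₁ * A₃).trace = (A₁' * A₃').trace)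
    (h23 : (A₂ * A₃).trace = (A₂' * A₃').trace)
    (h123 : (A₁ * A₂ * A₃).trace = (A₁' * A₂' * A₃').trace) :
    α = α' ∧ β = β' ∧ γ = γ' ∧ δ = δ' ∧ A₁ = A₁' ∧ A₂ = A₂' ∧ A₃ = A₃' := by
  subst hA₁ hA₁' hA₂ hA₂' hA₃ hA₃'
  simp [Matrix.trace_fin_two, Matrix.mul_apply, Fin.sum_univ_two] at h12 h13 h23 h123
  have hαα : α = α' := by linear_combination h12
  subst hαα
  have hγ : γ = γ' := by
    field_simp at h23
    exact h23
  have hβ : β = β' := by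
    field_simp at h123
    exact h123
  have hδ : δ = δ' := by linear_combination h13
  subst hγ hβ hδ
  simp
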